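/- Let π be a nonnesting permutation of the multiset {1,1,2,2,…,n,n}, let π̂ be its underlying permutation, and let ijk be any permutation of {1,2,3} (viewed as a pattern of length 3). Then π avoids the pattern ijjk (the length-4 word obtained from ijk by duplicating its middle letter j) if and only if π̂ avoids the pattern ijk. -/

import Mathlib

/-- `w` is a permutation of the multiset `{1,1,2,2,…,n,n}`:
a word in which every value in `{1,…,n}` occurs exactly twice
and no other value occurs. -/
def IsMultisetPerm (n : ℕ) (w : List ℕ) : Prop :=
  ∀ i : ℕ, w.count i = if 1 ≤ i ∧ i ≤ n then 2 else 0

/-- `t` is order-isomorphic to the word `σ`: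
same length, and entries compare (both `<` and `=`) in the same way. -/
def OrderIsoWord (t σ : List ℕ) : Prop :=
  t.length = σ.length ∧
  ∀ r s : ℕ, r < σ.length → s < σ.length →
    ((t.getD r 0 < t.getD s 0 ↔ σ.getD r 0 < σ.getD s 0) ∧
     (t.getD r 0 = t.getD s 0 ↔ σ.getD r 0 = σ.getD s 0))

/-- `w` contains the pattern `σ`: some subsequence of `w`
is order-isomorphic to `σ`. -/
def Contains (w σ : List ℕ) : Prop :=
  ∃ t : List ℕ, t.Sublist w ∧ OrderIsoWord t σ

/-- `w` avoids the pattern `σ`. -/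
def Avoids (w σ : List ℕ) : Prop := ¬ Contains w σ

/-- `w` is a nonnesting permutation of `{1,1,2,2,…,n,n}`:
it avoids the patterns `1221` and `2112`. -/
def IsNonnesting (n : ℕ) (w : List ℕ) : Prop :=
  IsMultisetPerm n w ∧ Avoids w [1,2,2,1] ∧ Avoids w [2,1,1,2]

/-- The underlying permutation of a word: the subsequence consisting of
the first occurrence of each value. -/
def underlyingPerm (w : List ℕ) : List ℕ := (w.reverse.dedup).reverse

lemma gd0 {a : ℕ} {l : List ℕ} {d : ℕ} : List.getD (a::l) 0 d = a := rfl
lemma gd1 {a b : ℕ} {l : List ℕ} {d : ℕ} : List.getD (a::b::l) 1 d = b := rfl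
lemma gd2 {a b c : ℕ} {l : List ℕ} {d : ℕ} : List.getD (a::b::c::l) 2 d = c := rfl
lemma gd3 {a b c e : ℕ} {l : List ℕ} {d : ℕ} : List.getD (a::b::c::e::l) 3 d = e := rfl

def Rel3 (x y z i j k : ℕ) : Prop :=
  (x<y↔i<j)∧(x=y↔i=j)∧(x<z↔i<k)∧(x=z↔i=k)∧(y<z↔j<k)∧(y=z↔j=k)

lemma oi3_iff {x y z i j k : ℕ} :
    OrderIsoWord [x,y,z] [i,j,k] ↔ Rel3 x y z i j k := by
  constructor
  · rintro ⟨-, h⟩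
    have h01 := h 0 1 (by simp) (by simp)
    have h02 := h 0 2 (by simp) (by simp)
    have h12 := h 1 2 (by simp) (by simp)
    simp only [gd0, gd1, gd2, gd3] at h01 h02 h12
    exact ⟨h01.1, h01.2, h02.1, h02.2, h12.1, h12.2⟩
  · rintro ⟨a,b,c,d,e,f⟩
    refine ⟨rfl, ?_⟩
    intro r s hr hs
    simp only [List.length_cons, List.length_nil] at hr hs
    interval_cases r <;> interval_cases s <;> constructor <;> simp only [gd0, gd1, gd2, gd3] <;> omega

lemma oi4_iff {a b c d i j k : ℕ} :
    OrderIsoWord [a,b,c,d] [i,j,j,k] ↔ (b = c ∧ Rel3 a b d i j k) := by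
  constructor
  · rintro ⟨-, h⟩
    have h01 := h 0 1 (by simp) (by simp)
    have h03 := h 0 3 (by simp) (by simp)
    have h13 := h 1 3 (by simp) (by simp)
    have h12 := h 1 2 (by simp) (by simp)
    simp only [gd0, gd1, gd2, gd3] at h01 h03 h13 h12
    exact ⟨h12.2.mpr (by trivial), h01.1, h01.2, h03.1, h03.2, h13.1, h13.2⟩
  · rintro ⟨rfl, A,B,C,D,E,F⟩
    refine ⟨rfl, ?_⟩
    intro r s hr hs
    simp only [List.length_cons, List.length_nil] at hr hs
    interval_cases r <;> interval_cases s <;> constructor <;> simp only [gd0, gd1, gd2, gd3] <;> omega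


/-- split of a cons at an occurrence of y with nothing-after condition -/
lemma split_cons {a y x : ℕ} {v : List ℕ} :
    (∃ B A, a::v = B++y::A ∧ y ∉ A ∧ x ∈ A) ↔
      ((a = y ∧ y ∉ v ∧ x ∈ v) ∨ (∃ B A, v = B++y::A ∧ y ∉ A ∧ x ∈ A)) := by
  constructor
  · rintro ⟨B, A, hv, hyA, hxA⟩
    cases B with
    | nil => simp at hv; exact Or.inl ⟨hv.1, hv.2 ▸ hyA, hv.2 ▸ hxA⟩
    | cons b B' =>
      simp at hv
      exact Or.inr ⟨B', A, hv.2, hyA, hxA⟩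
  · rintro (⟨rfl, h1, h2⟩ | ⟨B, A, rfl, h1, h2⟩)
    · exact ⟨[], v, by simp, h1, h2⟩
    · exact ⟨a::B, A, by simp, h1, h2⟩

/-- dedup keeps last occurrences: [y,x] <+ dedup v iff some x after the last y -/
lemma dedup_pair_iff {x y : ℕ} (hxy : x ≠ y) : ∀ (v : List ℕ),
    (List.Sublist [y,x] v.dedup ↔ ∃ B A, v = B++y::A ∧ y ∉ A ∧ x ∈ A) := by
  intro v
  induction v with
  | nil => simp
  | cons a v ih =>
    rw [split_cons]
    by_cases ha : a ∈ v
    · rw [List.dedup_cons_of_mem ha, ih]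
      constructor
      · exact Or.inr
      · rintro (⟨rfl, hyv, -⟩ | h)
        · exact absurd ha hyv
        · exact h
    · rw [List.dedup_cons_of_notMem ha]
      constructor
      · intro h
        cases h with
        | cons _ h => -- [y,x] <+ dedup v
          exact Or.inr (ih.mp h)
        | cons_cons _ h => -- a = y, [x] <+ dedup v
          have hx : x ∈ v := List.mem_dedup.mp (List.singleton_sublist.mp h)
          exact Or.inl ⟨rfl, ha, hx⟩
      · rintro (⟨rfl, -, hx⟩ | h)
        · exact (List.singleton_sublist.mpr (List.mem_dedup.mpr hx)).cons₂ _
        · exact (ih.mpr h).cons a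

/-- [x,y] <+ underlyingPerm w ↔ some x strictly before the first y -/
lemma up_pair_iff {x y : ℕ} (hxy : x ≠ y) (w : List ℕ) :
    List.Sublist [x,y] (underlyingPerm w) ↔ ∃ A B, w = A++y::B ∧ y ∉ A ∧ x ∈ A := by
  have h1 : List.Sublist [x,y] (underlyingPerm w) ↔ List.Sublist [y,x] w.reverse.dedup := by
    rw [underlyingPerm, ← List.reverse_sublist]
    simp
  rw [h1, dedup_pair_iff hxy]
  constructor
  · rintro ⟨B, A, hv, hyA, hxA⟩
    refine ⟨A.reverse, B.reverse, ?_, by simpa using hyA, by simpa using hxA⟩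
    have := congrArg List.reverse hv
    simpa using this
  · rintro ⟨A, B, rfl, hyA, hxA⟩
    exact ⟨B.reverse, A.reverse, by simp, by simpa using hyA, by simpa using hxA⟩

lemma mem_up {x : ℕ} {w : List ℕ} : x ∈ underlyingPerm w ↔ x ∈ w := by
  simp [underlyingPerm]

lemma nodup_up (w : List ℕ) : (underlyingPerm w).Nodup := by
  simp [underlyingPerm, List.nodup_dedup]

/-- uniqueness of the first-occurrence split -/
lemma first_split_unique {y : ℕ} : ∀ {A A' B B' : List ℕ},
    A++y::B = A'++y::B' → y ∉ A → y ∉ A' → A = A' ∧ B = B' := by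
  intro A
  induction A with
  | nil =>
    intro A' B B' h hy hy'
    cases A' with
    | nil => simp_all
    | cons a A'' =>
      simp only [List.nil_append, List.cons_append, List.cons.injEq] at h
      exact absurd (by rw [h.1]; exact List.mem_cons_self) hy'
  | cons a A ih =>
    intro A' B B' h hy hy'
    cases A' with
    | nil =>
      simp only [List.cons_append, List.nil_append, List.cons.injEq] at h
      exact absurd (by rw [← h.1]; exact List.mem_cons_self) hy
    | cons a' A'' =>
      simp only [List.cons_append, List.cons.injEq] at h
      have := ih h.2 (fun hm => hy (List.mem_cons_of_mem a hm)) (fun hm => hy' (List.mem_cons_of_mem a' hm))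
      exact ⟨by rw [h.1, this.1], this.2⟩

/-- trichotomy in a nodup list -/
lemma nodup_tri {x y : ℕ} (hxy : x ≠ y) : ∀ {u : List ℕ}, u.Nodup → x ∈ u → y ∈ u →
    List.Sublist [x,y] u ∨ List.Sublist [y,x] u := by
  intro u
  induction u with
  | nil => simp
  | cons a u ih =>
    intro hnd hx hy
    rcases List.mem_cons.mp hx with rfl | hx'
    · have hy' : y ∈ u := by
        rcases List.mem_cons.mp hy with h | h
        exacts [absurd h.symm hxy, h]
      exact Or.inl ((List.singleton_sublist.mpr hy').cons₂ _)
    · rcases List.mem_cons.mp hy with rfl | hy'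
      · exact Or.inr ((List.singleton_sublist.mpr hx').cons₂ _)
      · rcases ih (List.Nodup.of_cons hnd) hx' hy' with h | h
        · exact Or.inl (h.cons a)
        · exact Or.inr (h.cons a)

/-- antisymmetry in a nodup list -/
lemma nodup_antisym {x y : ℕ} (hxy : x ≠ y) : ∀ {u : List ℕ}, u.Nodup →
    List.Sublist [x,y] u → List.Sublist [y,x] u → False := by
  intro u
  induction u with
  | nil => simp
  | cons a u ih =>
    intro hnd h1 h2
    rcases List.sublist_cons_iff.mp h1 with h1' | ⟨r, hr, hr'⟩
    · rcases List.sublist_cons_iff.mp h2 with h2' | ⟨s, hs, hs'⟩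
      · exact ih (List.Nodup.of_cons hnd) h1' h2'
      · injection hs with ha hs2
        subst ha
        exact (List.nodup_cons.mp hnd).1 (h1'.subset (by simp))
    · injection hr with ha hr2
      subst ha
      rcases List.sublist_cons_iff.mp h2 with h2' | ⟨s, hs, hs'⟩
      · exact (List.nodup_cons.mp hnd).1 (h2'.subset (by simp))
      · injection hs with ha' hs2
        exact hxy ha'.symm

/-- composing two adjacent pairs in a nodup list -/
lemma nodup_three {x y z : ℕ} (hxy : x ≠ y) (hyz : y ≠ z) : ∀ {u : List ℕ}, u.Nodup →
    List.Sublist [x,y] u → List.Sublist [y,z] u → List.Sublist [x,y,z] u := by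
  intro u
  induction u with
  | nil => simp
  | cons a u ih =>
    intro hnd h1 h2
    rcases List.sublist_cons_iff.mp h1 with h1' | ⟨r, hr, hr'⟩
    · rcases List.sublist_cons_iff.mp h2 with h2' | ⟨s, hs, hs'⟩
      · exact (ih (List.Nodup.of_cons hnd) h1' h2').cons a
      · injection hs with ha hs2
        subst ha
        exact absurd (h1'.subset (by simp)) (List.nodup_cons.mp hnd).1
    · injection hr with ha hr2
      subst ha
      subst hr2
      rcases List.sublist_cons_iff.mp h2 with h2' | ⟨s, hs, hs'⟩
      · exact h2'.cons₂ _
      · injection hs with ha' hs2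
        exact absurd ha'.symm hxy


lemma split1 {q : ℕ} : ∀ {l : List ℕ}, l.count q = 1 →
    ∃ B C, l = B++q::C ∧ q ∉ B ∧ q ∉ C := by
  intro l
  induction l with
  | nil => simp
  | cons a l ih =>
    intro h
    by_cases ha : a = q
    · subst ha
      have h0 : l.count a = 0 := by simpa [List.count_cons] using h
      exact ⟨[], l, rfl, by simp, List.count_eq_zero.mp h0⟩
    · have h1 : l.count q = 1 := by simpa [List.count_cons, ha] using h
      obtain ⟨B, C, rfl, hB, hC⟩ := ih h1
      refine ⟨a::B, C, rfl, ?_, hC⟩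
      simp only [List.mem_cons, not_or]
      exact ⟨fun h' => ha h'.symm, hB⟩

lemma split2 {q : ℕ} {w : List ℕ} (h : w.count q = 2) :
    ∃ A B C, w = A++q::(B++q::C) ∧ q ∉ A ∧ q ∉ B ∧ q ∉ C := by
  induction w with
  | nil => simp at h
  | cons a w ih =>
    by_cases ha : a = q
    · subst ha
      have h1 : w.count a = 1 := by simpa [List.count_cons] using h
      obtain ⟨B, C, rfl, hB, hC⟩ := split1 h1
      exact ⟨[], B, C, rfl, by simp, hB, hC⟩
    · have h2 : w.count q = 2 := by simpa [List.count_cons, ha] using h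
      obtain ⟨A, B, C, rfl, hA, hB, hC⟩ := ih h2
      refine ⟨a::A, B, C, rfl, ?_, hB, hC⟩
      simp only [List.mem_cons, not_or]
      exact ⟨fun h' => ha h'.symm, hA⟩

lemma count_two_decomp {q : ℕ} {A B C : List ℕ} (hA : q ∉ A) (hB : q ∉ B) (hC : q ∉ C) :
    (A++q::(B++q::C)).count q = 2 := by
  simp [List.count_append, List.count_cons, List.count_eq_zero.mpr hA,
    List.count_eq_zero.mpr hB, List.count_eq_zero.mpr hC]

/-- if [x,q,q] <+ w with the canonical split, then x occurs in A -/
lemma mem_A_of_sub {x q : ℕ} {A B C : List ℕ} (hxq : x ≠ q)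
    (hA : q ∉ A) (hB : q ∉ B) (hC : q ∉ C)
    (hs : List.Sublist [x,q,q] (A++q::(B++q::C))) : x ∈ A := by
  obtain ⟨s1, s2, heq, hs1, hs2⟩ := List.sublist_append_iff.mp hs
  cases s1 with
  | nil =>
    exfalso
    simp only [List.nil_append] at heq
    subst heq
    rcases List.sublist_cons_iff.mp hs2 with h | ⟨r, hr, hr'⟩
    · have hle := h.count_le q
      have : (B++q::C).count q = 1 := by
        simp [List.count_append, List.count_cons, List.count_eq_zero.mpr hB,
          List.count_eq_zero.mpr hC]
      rw [this] at hle
      simp [List.count_cons, hxq] at hle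
    · injection hr with h1 _
      exact hxq h1
  | cons a s1' =>
    have : a = x := by
      simp only [List.cons_append, List.cons.injEq] at heq
      exact heq.1.symm
    subst this
    exact hs1.subset List.mem_cons_self

/-- if [q,q,z] <+ w with the canonical split, then z occurs in C -/
lemma mem_C_of_sub {z q : ℕ} {A B C : List ℕ} (hzq : z ≠ q)
    (hA : q ∉ A) (hB : q ∉ B) (hC : q ∉ C)
    (hs : List.Sublist [q,q,z] (A++q::(B++q::C))) : z ∈ C := by
  have hs' : List.Sublist [q,q,z] ((A++q::B)++q::C) := by
    simpa [List.append_assoc] using hs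
  obtain ⟨s1, s2, heq, hs1, hs2⟩ := List.sublist_append_iff.mp hs'
  have hcount1 : (A++q::B).count q = 1 := by
    simp [List.count_append, List.count_cons, List.count_eq_zero.mpr hA,
      List.count_eq_zero.mpr hB]
  have hle := hs1.count_le q
  rw [hcount1] at hle
  cases s1 with
  | nil =>
    exfalso
    simp only [List.nil_append] at heq
    subst heq
    rcases List.sublist_cons_iff.mp hs2 with h | ⟨r, hr, hr'⟩
    · have hle2 := h.count_le q
      rw [List.count_eq_zero.mpr hC] at hle2
      simp [List.count_cons, hzq] at hle2
    · injection hr with _ h2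
      subst h2
      exact hC (hr'.subset (by simp))
  | cons a s1' =>
    cases s1' with
    | nil =>
      simp only [List.cons_append, List.nil_append, List.cons.injEq] at heq
      obtain ⟨rfl, heq2⟩ := heq
      subst heq2
      rcases List.sublist_cons_iff.mp hs2 with h | ⟨r, hr, hr'⟩
      · exfalso
        have hle2 := h.count_le q
        rw [List.count_eq_zero.mpr hC] at hle2
        simp [List.count_cons] at hle2
      · injection hr with _ h2
        subst h2
        exact List.singleton_sublist.mp hr'
    | cons b s1'' =>
      exfalso
      simp only [List.cons_append, List.cons.injEq] at heq
      obtain ⟨rfl, rfl, -⟩ := heq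
      simp [List.count_cons] at hle


lemma len3 {t : List ℕ} (h : t.length = 3) : ∃ a b c, t = [a,b,c] := by
  rcases t with _ | ⟨a, _ | ⟨b, _ | ⟨c, _ | ⟨d, t⟩⟩⟩⟩ <;>
    first
      | exact ⟨a, b, c, rfl⟩
      | (exfalso; simp at h)

lemma len4 {t : List ℕ} (h : t.length = 4) : ∃ a b c d, t = [a,b,c,d] := by
  rcases t with _ | ⟨a, _ | ⟨b, _ | ⟨c, _ | ⟨d, _ | ⟨e, t⟩⟩⟩⟩⟩ <;>
    first
      | exact ⟨a, b, c, d, rfl⟩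
      | (exfalso; simp at h)

lemma nest {n : ℕ} {w : List ℕ} (h1 : Avoids w [1,2,2,1]) (h2 : Avoids w [2,1,1,2])
    {p q : ℕ} (hpq : p ≠ q) (hs : List.Sublist [p,q,q,p] w) : False := by
  rcases Nat.lt_or_ge p q with h | h
  · refine h1 ⟨[p,q,q,p], hs, rfl, ?_⟩
    intro r s hr hs'
    simp only [List.length_cons, List.length_nil] at hr hs'
    interval_cases r <;> interval_cases s <;> constructor <;>
      simp only [gd0, gd1, gd2, gd3] <;> omega
  · have h' : q < p := by omega
    refine h2 ⟨[p,q,q,p], hs, rfl, ?_⟩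
    intro r s hr hs'
    simp only [List.length_cons, List.length_nil] at hr hs'
    interval_cases r <;> interval_cases s <;> constructor <;>
      simp only [gd0, gd1, gd2, gd3] <;> omega

theorem nonnesting_avoid_ijjk_iff_underlying (n : ℕ) (w : List ℕ)
    (hw : IsNonnesting n w) (i j k : ℕ) (hijk : [i, j, k].Perm [1, 2, 3]) :
    Avoids w [i, j, j, k] ↔ Avoids (underlyingPerm w) [i, j, k] := by
  obtain ⟨hmp, hav1, hav2⟩ := hw
  have hnd123 : List.Nodup [i,j,k] := hijk.nodup_iff.mpr (by decide)
  simp only [List.nodup_cons, List.mem_cons, List.mem_singleton, not_or,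
    List.not_mem_nil, not_false_iff, List.nodup_nil, and_true] at hnd123
  obtain ⟨⟨hij, hik⟩, hjk⟩ := hnd123
  have hcount : ∀ v, v ∈ w → w.count v = 2 := by
    intro v hv
    have h := hmp v
    by_cases hc : 1 ≤ v ∧ v ≤ n
    · simpa [hc] using h
    · exfalso
      rw [if_neg hc] at h
      exact (List.count_eq_zero.mp h) hv
  unfold Avoids
  rw [not_iff_not]
  constructor
  · -- w contains ijjk → underlying contains ijk
    rintro ⟨t, hts, hoi⟩
    have hlen : t.length = 4 := by simpa using hoi.1
    obtain ⟨a, b, c, d, rfl⟩ := len4 hlen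
    obtain ⟨rfl, hrel⟩ := oi4_iff.mp hoi
    obtain ⟨R1, R2, R3, R4, R5, R6⟩ := hrel
    have hab : a ≠ b := fun h => hij (R2.mp h)
    have had : a ≠ d := fun h => hik (R4.mp h)
    have hbd : b ≠ d := fun h => hjk (R6.mp h)
    have haw : a ∈ w := hts.subset (by simp)
    have hbw : b ∈ w := hts.subset (by simp)
    have hdw : d ∈ w := hts.subset (by simp)
    obtain ⟨A, B, C, rfl, hA, hB, hC⟩ := split2 (hcount b hbw)
    -- a occurs before the first b
    have habb : List.Sublist [a,b,b] (A++b::(B++b::C)) := by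
      have : List.Sublist [a,b,b] [a,b,b,d] :=
        (((List.nil_sublist [d]).cons₂ b).cons₂ b).cons₂ a
      exact this.trans hts
    have haA : a ∈ A := mem_A_of_sub hab hA hB hC habb
    -- d occurs after the second b
    have hbbd : List.Sublist [b,b,d] (A++b::(B++b::C)) := by
      have : List.Sublist [b,b,d] [a,b,b,d] := (List.Sublist.refl [b,b,d]).cons a
      exact this.trans hts
    have hdC : d ∈ C := mem_C_of_sub (Ne.symm hbd) hA hB hC hbbd
    -- [b,d] in the underlying permutation
    have hbu : b ∈ underlyingPerm (A++b::(B++b::C)) := mem_up.mpr hbw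
    have hdu : d ∈ underlyingPerm (A++b::(B++b::C)) := mem_up.mpr hdw
    have hbd_up : List.Sublist [b,d] (underlyingPerm (A++b::(B++b::C))) := by
      rcases nodup_tri hbd (nodup_up _) hbu hdu with h | h
      · exact h
      · exfalso
        obtain ⟨A', B', heq, hbA', hdA'⟩ := (up_pair_iff (Ne.symm hbd) _).mp h
        obtain ⟨hAA, -⟩ := first_split_unique heq.symm hbA' hA
        rw [hAA] at hdA'
        -- d in A and d in C : nesting [d,b,b,d]
        have hsub : List.Sublist [d,b,b,d] (A++b::(B++b::C)) := by
          have h1 : List.Sublist [b,d] (b::C) := (List.singleton_sublist.mpr hdC).cons₂ b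
          have h2 : List.Sublist [b,d] (B++b::C) := h1.trans (List.sublist_append_right B _)
          have h3 : List.Sublist [b,b,d] (b::(B++b::C)) := h2.cons₂ b
          have h4 : List.Sublist ([d]++[b,b,d]) (A++(b::(B++b::C))) :=
            List.Sublist.append (List.singleton_sublist.mpr hdA') h3
          exact h4
        exact nest (n := n) hav1 hav2 (Ne.symm hbd) hsub
    have hab_up : List.Sublist [a,b] (underlyingPerm (A++b::(B++b::C))) := by
      apply (up_pair_iff hab _).mpr
      exact ⟨A, B++b::C, rfl, hA, haA⟩
    refine ⟨[a,b,d], nodup_three hab hbd (nodup_up _) hab_up hbd_up, ?_⟩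
    exact oi3_iff.mpr ⟨R1, R2, R3, R4, R5, R6⟩
  · -- underlying contains ijk → w contains ijjk
    rintro ⟨t, hts, hoi⟩
    have hlen : t.length = 3 := by simpa using hoi.1
    obtain ⟨x, y, z, rfl⟩ := len3 hlen
    obtain ⟨R1, R2, R3, R4, R5, R6⟩ := oi3_iff.mp hoi
    have hxy : x ≠ y := fun h => hij (R2.mp h)
    have hxz : x ≠ z := fun h => hik (R4.mp h)
    have hyz : y ≠ z := fun h => hjk (R6.mp h)
    have hxw : x ∈ w := mem_up.mp (hts.subset (by simp))
    have hyw : y ∈ w := mem_up.mp (hts.subset (by simp))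
    have hzw : z ∈ w := mem_up.mp (hts.subset (by simp))
    have hxy_up : List.Sublist [x,y] (underlyingPerm w) := by
      refine List.Sublist.trans ?_ hts
      exact ((List.nil_sublist [z]).cons₂ y).cons₂ x
    have hyz_up : List.Sublist [y,z] (underlyingPerm w) := by
      refine List.Sublist.trans ?_ hts
      exact (List.Sublist.refl [y,z]).cons x
    obtain ⟨A, B, C, hw_eq, hA, hB, hC⟩ := split2 (hcount y hyw)
    have hxA : x ∈ A := by
      obtain ⟨A', B', heq, hyA', hxA'⟩ := (up_pair_iff hxy _).mp hxy_up
      rw [hw_eq] at heq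
      obtain ⟨hAA, -⟩ := first_split_unique heq.symm hyA' hA
      rwa [hAA] at hxA'
    have hzA : z ∉ A := by
      intro hz
      have : List.Sublist [z,y] (underlyingPerm w) := by
        apply (up_pair_iff (Ne.symm hyz) _).mpr
        exact ⟨A, B++y::C, hw_eq, hA, hz⟩
      exact nodup_antisym hyz (nodup_up _) hyz_up this
    have hzC : z ∈ C := by
      by_contra hzC
      have hcz : (A++y::(B++y::C)).count z = 2 := hw_eq ▸ hcount z hzw
      have hBz : B.count z = 2 := by
        rw [List.count_append, List.count_cons, List.count_append, List.count_cons,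
          List.count_eq_zero.mpr hzA, List.count_eq_zero.mpr hzC] at hcz
        simpa [hyz] using hcz
      have hzzB : List.Sublist [z,z] B := by
        have := List.replicate_sublist_iff.mpr (le_of_eq hBz.symm)
        simpa using this
      have hsub : List.Sublist [y,z,z,y] (A++y::(B++y::C)) := by
        have h1 : List.Sublist ([z,z]++[y]) (B++y::C) :=
          List.Sublist.append hzzB (List.singleton_sublist.mpr (List.mem_cons_self (a := y) (l := C)))
        have h2 : List.Sublist [y,z,z,y] (y::(B++y::C)) := h1.cons₂ y
        exact h2.trans (List.sublist_append_right A _)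
      exact nest (n := n) hav1 hav2 hyz (hw_eq ▸ hsub)
    have hoi4 : OrderIsoWord [x,y,y,z] [i,j,j,k] :=
      oi4_iff.mpr ⟨rfl, R1, R2, R3, R4, R5, R6⟩
    refine ⟨[x,y,y,z], ?_, hoi4⟩
    rw [hw_eq]
    have h1 : List.Sublist [y,z] (y::C) := (List.singleton_sublist.mpr hzC).cons₂ y
    have h2 : List.Sublist [y,z] (B++y::C) := h1.trans (List.sublist_append_right B _)
    have h3 : List.Sublist [y,y,z] (y::(B++y::C)) := h2.cons₂ y
    exact List.Sublist.append (List.singleton_sublist.mpr hxA) h3
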